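/- Let w : ℝⁿ → ℝ be continuous and suppose that whenever a C¹ function ψ touches w from above at a point x (i.e., ψ(x) = w(x) and ψ ≥ w near x) one has ∇ψ(x) = 0; and similarly whenever ψ touches w from below at x one has ∇ψ(x) = 0. Then w is constant on ℝⁿ. (Viscosity solutions of |∇w| = 0 are constants.) -/

import Mathlib

open Metric

/-- Auxiliary lemma: a viscosity subsolution of `-|∇w| = 0` satisfies a one-sided
quadratic bound near every point. -/
lemma stmt_17_aux {n : ℕ} (w : EuclideanSpace ℝ (Fin n) → ℝ) (hw : Continuous w)
    (hsub : ∀ (x : EuclideanSpace ℝ (Fin n)) (ψ : EuclideanSpace ℝ (Fin n) → ℝ),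
      ContDiff ℝ 1 ψ → ψ x = w x →
      (∃ r > 0, ∀ y ∈ Metric.ball x r, w y ≤ ψ y) → fderiv ℝ ψ x = 0)
    (x : EuclideanSpace ℝ (Fin n)) :
    ∃ K : ℝ, 0 ≤ K ∧ ∀ y ∈ Metric.ball x 1, w y ≤ w x + K * ‖y - x‖ ^ 2 := by
  have hB : IsCompact (Metric.closedBall x 1) := isCompact_closedBall x 1
  have hxB : x ∈ Metric.closedBall x 1 := Metric.mem_closedBall_self (by norm_num)
  obtain ⟨m, hmB, hm⟩ := hB.exists_isMaxOn ⟨x, hxB⟩ hw.continuousOn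
  set K : ℝ := w m - w x + 1 with hK
  have hwx : w x ≤ w m := hm hxB
  have hKpos : 0 < K := by simp only [hK]; linarith
  set u : EuclideanSpace ℝ (Fin n) → ℝ := fun y => w y - K * ‖y - x‖ ^ 2 with hu
  have hucont : Continuous u :=
    hw.sub (continuous_const.mul (((continuous_id.sub continuous_const).norm).pow 2))
  obtain ⟨z, hzB, hz⟩ := hB.exists_isMaxOn ⟨x, hxB⟩ hucont.continuousOn
  have hux : u x = w x := by simp [hu]
  have huzx : w x ≤ u z := hux ▸ hz hxB
  -- z is in the interior of the ball
  have hzlt : dist z x < 1 := by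
    rcases lt_or_eq_of_le (Metric.mem_closedBall.mp hzB) with h | h
    · exact h
    · exfalso
      have hnz : ‖z - x‖ = 1 := by rw [← dist_eq_norm]; exact h
      have huz : u z = w z - K := by simp [hu, hnz]
      have hwz : w z ≤ w m := hm hzB
      have : u z ≤ w x - 1 := by rw [huz, hK]; linarith
      linarith
  -- the test function
  set c : ℝ := u z with hc
  set ψ : EuclideanSpace ℝ (Fin n) → ℝ := fun y => K * ‖y - x‖ ^ 2 + c with hψ
  have hψC : ContDiff ℝ 1 ψ :=
    (contDiff_const.mul ((contDiff_norm_sq ℝ).comp (contDiff_id.sub contDiff_const))).add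
      contDiff_const
  have hψz : ψ z = w z := by simp [hψ, hc, hu]
  have htouch : ∃ r > 0, ∀ y ∈ Metric.ball z r, w y ≤ ψ y := by
    refine ⟨1 - dist z x, by linarith, fun y hy => ?_⟩
    have hyz := Metric.mem_ball.mp hy
    have hyB : y ∈ Metric.closedBall x 1 := by
      have : dist y x ≤ 1 := by
        calc dist y x ≤ dist y z + dist z x := dist_triangle y z x
          _ ≤ 1 := by linarith
      exact Metric.mem_closedBall.mpr this
    have := hz hyB
    simp only [hu, Set.mem_setOf_eq] at this
    simp only [hψ, hc, hu]
    linarith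
  have h0 : fderiv ℝ ψ z = 0 := hsub z ψ hψC hψz htouch
  -- deduce z = x by computing a directional derivative
  have hzx : z = x := by
    set v : EuclideanSpace ℝ (Fin n) := z - x with hv
    have hψd : HasFDerivAt ψ (fderiv ℝ ψ z) z :=
      ((hψC.differentiable one_ne_zero) z).hasFDerivAt
    have hline : HasDerivAt (fun t : ℝ => z + t • v) v 0 := by
      simpa using ((hasDerivAt_id (0:ℝ)).smul_const v).const_add z
    have hψd' : HasFDerivAt ψ (fderiv ℝ ψ z) (z + (0:ℝ) • v) := by simpa using hψd
    have hcomp : HasDerivAt (fun t : ℝ => ψ (z + t • v)) ((fderiv ℝ ψ z) v) 0 :=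
      by have := hψd'.comp_hasDerivAt 0 hline; exact this
    have heq : (fun t : ℝ => ψ (z + t • v)) = fun t : ℝ => K * (1 + t) ^ 2 * ‖v‖ ^ 2 + c := by
      funext t
      have h1 : z + t • v - x = (1 + t) • v := by
        simp only [hv]; module
      simp only [hψ, h1, norm_smul, mul_pow]
      rw [Real.norm_eq_abs, sq_abs]
      ring
    have hpoly : HasDerivAt (fun t : ℝ => K * (1 + t) ^ 2 * ‖v‖ ^ 2 + c)
        (2 * K * ‖v‖ ^ 2) 0 := by
      have h1 : HasDerivAt (fun t : ℝ => (1 + t) ^ 2) 2 0 := by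
        simpa using (((hasDerivAt_id (0:ℝ)).const_add 1).fun_pow 2)
      have := ((h1.const_mul K).mul_const (‖v‖ ^ 2)).add_const c
      convert this using 1
      · rfl
      · rfl
      ring
    rw [heq] at hcomp
    have huniq := hcomp.unique hpoly
    rw [h0] at huniq
    simp only [ContinuousLinearMap.zero_apply] at huniq
    have hvz : ‖v‖ ^ 2 = 0 := by
      by_contra h
      have h2 : (0:ℝ) < ‖v‖ ^ 2 := lt_of_le_of_ne (sq_nonneg _) (Ne.symm h)
      nlinarith
    have : v = 0 := by
      have : ‖v‖ = 0 := by
        have := sq_eq_zero_iff.mp hvz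
        exact this
      exact norm_eq_zero.mp this
    have hzx0 : z - x = 0 := this
    exact sub_eq_zero.mp hzx0
  -- conclude the quadratic bound
  refine ⟨K, le_of_lt hKpos, fun y hy => ?_⟩
  have hyB : y ∈ Metric.closedBall x 1 := Metric.ball_subset_closedBall hy
  have h1 := hz hyB
  simp only [hu, Set.mem_setOf_eq] at h1
  have h2 : u z = u x := by rw [hzx]
  rw [hux] at h2
  simp only [hu] at h2
  linarith

/-- viscosity solutions of |∇w| = 0 on ℝⁿ are constant. -/
theorem stmt_17 (n : ℕ) (w : EuclideanSpace ℝ (Fin n) → ℝ) (hw : Continuous w)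
    (hsub : ∀ (x : EuclideanSpace ℝ (Fin n)) (ψ : EuclideanSpace ℝ (Fin n) → ℝ),
      ContDiff ℝ 1 ψ → ψ x = w x →
      (∃ r > 0, ∀ y ∈ Metric.ball x r, w y ≤ ψ y) → fderiv ℝ ψ x = 0)
    (hsup : ∀ (x : EuclideanSpace ℝ (Fin n)) (ψ : EuclideanSpace ℝ (Fin n) → ℝ),
      ContDiff ℝ 1 ψ → ψ x = w x →
      (∃ r > 0, ∀ y ∈ Metric.ball x r, ψ y ≤ w y) → fderiv ℝ ψ x = 0) :
    ∀ x y, w x = w y := by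
  -- the negation of w is also a subsolution
  have hsub' : ∀ (x : EuclideanSpace ℝ (Fin n)) (ψ : EuclideanSpace ℝ (Fin n) → ℝ),
      ContDiff ℝ 1 ψ → ψ x = -(w x) →
      (∃ r > 0, ∀ y ∈ Metric.ball x r, -(w y) ≤ ψ y) → fderiv ℝ ψ x = 0 := by
    intro x ψ hψC hψx ⟨r, hr, hball⟩
    have := hsup x (fun y => -ψ y) hψC.neg (by simp [hψx])
      ⟨r, hr, fun y hy => by have := hball y hy; show -ψ y ≤ w y; linarith⟩
    rw [fderiv_fun_neg] at this
    exact neg_eq_zero.mp this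
  -- w has zero derivative everywhere
  have hderiv : ∀ x, HasFDerivAt w (0 : EuclideanSpace ℝ (Fin n) →L[ℝ] ℝ) x := by
    intro x
    obtain ⟨K₁, hK₁, h₁⟩ := stmt_17_aux w hw hsub x
    obtain ⟨K₂, hK₂, h₂⟩ := stmt_17_aux (fun y => -(w y)) hw.neg hsub' x
    set K : ℝ := K₁ + K₂ with hKdef
    have habs : ∀ y ∈ Metric.ball x 1, |w y - w x| ≤ K * ‖y - x‖ ^ 2 := by
      intro y hy
      have ha := h₁ y hy
      have hb := h₂ y hy
      have hn : 0 ≤ ‖y - x‖ ^ 2 := sq_nonneg _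
      rw [abs_le]
      constructor
      · nlinarith
      · nlinarith
    rw [hasFDerivAt_iff_isLittleO_nhds_zero]
    simp only [ContinuousLinearMap.zero_apply, sub_zero]
    rw [Asymptotics.isLittleO_iff]
    intro ε hε
    have hKpos : 0 < K + 1 := by linarith
    have hmem : Metric.ball (0 : EuclideanSpace ℝ (Fin n)) (min 1 (ε / (K + 1))) ∈
        nhds (0 : EuclideanSpace ℝ (Fin n)) :=
      Metric.ball_mem_nhds _ (lt_min one_pos (div_pos hε hKpos))
    filter_upwards [hmem] with h hh
    have hhn : ‖h‖ < min 1 (ε / (K + 1)) := by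
      simpa [dist_eq_norm] using Metric.mem_ball.mp hh
    have hy1 : x + h ∈ Metric.ball x 1 := by
      rw [Metric.mem_ball, dist_eq_norm]
      simpa using lt_of_lt_of_le hhn (min_le_left _ _)
    have h3 := habs (x + h) hy1
    rw [add_sub_cancel_left] at h3
    have hnorm : ‖h‖ < ε / (K + 1) := lt_of_lt_of_le hhn (min_le_right _ _)
    have hnn : 0 ≤ ‖h‖ := norm_nonneg _
    calc ‖w (x + h) - w x‖ = |w (x + h) - w x| := rfl
      _ ≤ K * ‖h‖ ^ 2 := h3
      _ = K * ‖h‖ * ‖h‖ := by ring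
      _ ≤ (K + 1) * (ε / (K + 1)) * ‖h‖ := by
          nlinarith [mul_le_mul_of_nonneg_right hnorm.le hnn, mul_nonneg hnn hnn, hKpos]
      _ = ε * ‖h‖ := by field_simp
  exact is_const_of_fderiv_eq_zero (fun x => (hderiv x).differentiableAt)
    (fun x => (hderiv x).fderiv)
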